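/- Let C ≥ 1 be an integer, let χ be a primitive Dirichlet character modulo C with values in ℂ, let ψ : ZMod C → ℂ be the standard additive character ψ(x) = exp(2πi·x̃/C) (for any lift x̃ of x), and let g ≥ 1. Then for every g×g matrix T over ZMod C whose determinant is a unit, the matrix Gauss sum satisfies Σ_{X} χ(det X) · ψ(tr(T·X)) = C^{g(g−1)/2} · χ(det T)⁻¹ · G(χ)^g, where the sum runs over all g×g matrices X over ZMod C and G(χ) = Σ_{x ∈ ZMod C} χ(x) ψ(x) is the ordinary Gauss sum of χ. -/

import Mathlib

open Matrix

/-- The standard additive character of `ZMod C` with values in `ℂ`,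
`x ↦ exp(2πi·x̃/C)` for `x̃` the standard lift of `x`. -/
noncomputable def stdAddChar (C : ℕ) (x : ZMod C) : ℂ :=
  Complex.exp (2 * Real.pi * Complex.I * (x.val : ℂ) / (C : ℂ))

open Finset

section Aux

variable {C : ℕ} [NeZero C]

lemma stdAddChar_eq (x : ZMod C) : stdAddChar C x = ZMod.stdAddChar x := by
  conv_rhs => rw [show x = ((x.val : ℤ) : ZMod C) by push_cast; simp [ZMod.natCast_zmod_val]]
  rw [ZMod.stdAddChar_coe, stdAddChar]
  push_cast
  ring_nf

lemma addChar_map_sum {A M : Type*} [AddCommMonoid A] [CommMonoid M] (ψ : AddChar A M)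
    {ι : Type*} (s : Finset ι) (f : ι → A) :
    ψ (∑ i ∈ s, f i) = ∏ i ∈ s, ψ (f i) := by
  classical
  induction s using Finset.induction with
  | empty => simp
  | insert a s h ih => rw [Finset.sum_insert h, Finset.prod_insert h, AddChar.map_add_eq_mul, ih]

lemma isPrimitive_inv {χ : DirichletCharacter ℂ C} (hχ : χ.IsPrimitive) :
    (χ⁻¹).IsPrimitive := by
  obtain ⟨hd, χ₀, h⟩ := (χ⁻¹).factorsThrough_conductor
  have hfact : χ.FactorsThrough (χ⁻¹).conductor := by
    refine ⟨hd, χ₀⁻¹, ?_⟩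
    rw [map_inv, ← h, inv_inv]
  have h1 : χ.conductor ≤ (χ⁻¹).conductor := Nat.sInf_le hfact
  have h2 : (χ⁻¹).conductor ≤ C := Nat.le_of_dvd (Nat.pos_of_ne_zero (NeZero.ne C))
    (DirichletCharacter.conductor_dvd_level _)
  rw [DirichletCharacter.IsPrimitive] at hχ ⊢
  omega


lemma F4 (b : ZMod C) :
    ∑ x : ZMod C, ZMod.stdAddChar (x * b) = if b = 0 then (C : ℂ) else 0 := by
  rw [AddChar.sum_mulShift b (ZMod.isPrimitive_stdAddChar C)]
  simp [ZMod.card]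

lemma F1 {χ : DirichletCharacter ℂ C} (hχ : (χ⁻¹).IsPrimitive) (a : ZMod C) :
    ∑ t : ZMod C, χ⁻¹ t * ZMod.stdAddChar (t * a)
      = χ a * gaussSum χ⁻¹ ZMod.stdAddChar := by
  have h := gaussSum_mulShift_of_isPrimitive (ZMod.stdAddChar (N := C)) hχ a
  rw [inv_inv] at h
  rw [← h, gaussSum]
  exact Finset.sum_congr rfl fun t _ => by rw [AddChar.mulShift_apply, mul_comm a t]

lemma F2 {χ : DirichletCharacter ℂ C} (hχ : (χ⁻¹).IsPrimitive) :
    gaussSum χ ZMod.stdAddChar * gaussSum χ⁻¹ ZMod.stdAddChar = χ⁻¹ (-1) * C := by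
  rw [gaussSum, Finset.sum_mul]
  have key : ∀ a : ZMod C, χ a * ZMod.stdAddChar a * gaussSum χ⁻¹ ZMod.stdAddChar
      = ∑ t : ZMod C, χ⁻¹ t * ZMod.stdAddChar (a * (t + 1)) := by
    intro a
    calc χ a * ZMod.stdAddChar a * gaussSum χ⁻¹ ZMod.stdAddChar
        = (χ a * gaussSum χ⁻¹ ZMod.stdAddChar) * ZMod.stdAddChar a := by ring
      _ = (∑ t : ZMod C, χ⁻¹ t * ZMod.stdAddChar (t * a)) * ZMod.stdAddChar a := by
          rw [F1 hχ a]
      _ = ∑ t : ZMod C, χ⁻¹ t * ZMod.stdAddChar (a * (t + 1)) := by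
          rw [Finset.sum_mul]
          refine Finset.sum_congr rfl fun t _ => ?_
          rw [mul_assoc, ← AddChar.map_add_eq_mul]
          congr 1
          ring
  simp_rw [key]
  rw [Finset.sum_comm]
  have h2 : ∀ t : ZMod C, ∑ a : ZMod C, χ⁻¹ t * ZMod.stdAddChar (a * (t + 1))
      = χ⁻¹ t * (if t + 1 = 0 then (C : ℂ) else 0) := by
    intro t; rw [← Finset.mul_sum, F4]
  simp_rw [h2]
  have h3 : ∀ t : ZMod C, (t + 1 = 0) ↔ (t = -1) := by
    intro t; rw [eq_neg_iff_add_eq_zero]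
  simp_rw [h3, mul_ite, mul_zero]
  rw [Finset.sum_ite_eq' Finset.univ (-1 : ZMod C)]
  simp

lemma chi_inv_neg_one_ne {χ : DirichletCharacter ℂ C} : χ⁻¹ (-1) ≠ 0 := by
  intro h
  have h1 : (χ⁻¹ * χ) ((-1 : (ZMod C)ˣ) : ZMod C) = 1 := by
    rw [inv_mul_cancel]
    exact MulChar.one_apply_coe _
  rw [MulChar.mul_apply, Units.val_neg, Units.val_one, h, zero_mul] at h1
  exact zero_ne_one h1

lemma Kne {χ : DirichletCharacter ℂ C} (hχ : (χ⁻¹).IsPrimitive) :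
    gaussSum χ⁻¹ ZMod.stdAddChar ≠ 0 := by
  intro h
  have h2 := F2 hχ
  rw [h, mul_zero] at h2
  rcases mul_eq_zero.mp h2.symm with h3 | h3
  · exact chi_inv_neg_one_ne h3
  · exact Nat.cast_ne_zero.mpr (NeZero.ne C) h3

lemma hD {χ : DirichletCharacter ℂ C} (d : ZMod C) :
    ∑ t : ZMod C, χ⁻¹ t * (if t * d = -1 then (1:ℂ) else 0) = χ⁻¹ (-1) * χ d := by
  by_cases hd : IsUnit d
  · obtain ⟨u, rfl⟩ := hd
    have hdu : (↑u : ZMod C) * ↑u⁻¹ = 1 := by rw [← Units.val_mul, mul_inv_cancel, Units.val_one]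
    have hdu' : (↑u⁻¹ : ZMod C) * ↑u = 1 := by rw [mul_comm]; exact hdu
    have key : ∀ t : ZMod C, (t * ↑u = -1) ↔ (t = -↑u⁻¹) := by
      intro t
      constructor
      · intro h
        calc t = t * ((↑u : ZMod C) * ↑u⁻¹) := by rw [hdu, mul_one]
          _ = (t * ↑u) * ↑u⁻¹ := by ring
          _ = -↑u⁻¹ := by rw [h]; ring
      · intro h
        rw [h]
        calc -↑u⁻¹ * (↑u : ZMod C) = -((↑u⁻¹ : ZMod C) * ↑u) := by ring
          _ = -1 := by rw [hdu']
    simp_rw [key, mul_ite, mul_one, mul_zero]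
    rw [Finset.sum_ite_eq' Finset.univ]
    simp only [Finset.mem_univ, if_true]
    rw [show (-↑u⁻¹ : ZMod C) = -1 * ↑u⁻¹ by rw [neg_one_mul], map_mul χ⁻¹]
    congr 1
    rw [MulChar.inv_apply, Ring.inverse_unit u⁻¹]
    simp
  · rw [MulChar.map_nonunit χ hd, mul_zero]
    refine Finset.sum_eq_zero fun t _ => ?_
    rw [if_neg, mul_zero]
    intro h
    exact hd (IsUnit.of_mul_eq_one (a := d) (-t) (by linear_combination -h))

lemma colPerm (n : ℕ) (Z : Matrix (Fin n) (Fin (n+1)) (ZMod C)) (k : Fin n) :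
    (Z.submatrix id Fin.succ).updateCol k (fun i => Z i 0)
      = (Z.submatrix id (Fin.succ k).succAbove).submatrix id (Fin.cycleRange k) := by
  obtain _ | m := n
  · exact k.elim0
  ext i j
  rw [Matrix.submatrix_apply, Matrix.submatrix_apply, id_eq]
  have hjlast : ∀ {a b : Fin (m+1)}, a < b → (a+1 : Fin (m+1)).val = a.val + 1 := by
    intro a b hab
    exact Fin.val_add_one_of_lt (hab.trans_le (Fin.le_last b))
  rcases lt_trichotomy j k with h | h | h
  · rw [Matrix.updateCol_ne h.ne, Matrix.submatrix_apply, id_eq]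
    rw [Fin.cycleRange_of_lt h]
    congr 1
    rw [Fin.succAbove_of_castSucc_lt]
    · ext
      simp [hjlast h]
    · rw [Fin.lt_def]
      simp only [Fin.coe_castSucc, Fin.val_succ, hjlast h]
      omega
  · subst h
    rw [Matrix.updateCol_self, Fin.cycleRange_self]
    simp only [id_eq]
    congr 1
  · rw [Matrix.updateCol_ne h.ne', Matrix.submatrix_apply, id_eq]
    rw [Fin.cycleRange_of_gt h]
    congr 1
    rw [Fin.succAbove_of_le_castSucc]
    rw [Fin.succ_le_castSucc_iff]
    exact h

lemma zeroCol_of_minors (n : ℕ) (Z : Matrix (Fin n) (Fin (n+1)) (ZMod C))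
    (hdet : IsUnit ((Z.submatrix id Fin.succ).det))
    (hm : ∀ k : Fin n, (Z.submatrix id (Fin.succ k).succAbove).det = 0) :
    ∀ i, Z i 0 = 0 := by
  set W := Z.submatrix id Fin.succ with hW
  have hcr : W.cramer (fun i => Z i 0) = 0 := by
    funext k
    rw [Matrix.cramer_apply, colPerm n Z k, Matrix.det_permute', hm k, mul_zero, Pi.zero_apply]
  have h2 := Matrix.mulVec_cramer W (fun i => Z i 0)
  rw [hcr, Matrix.mulVec_zero] at h2
  intro i
  have h3 := congrFun h2.symm i
  simp only [Pi.smul_apply, smul_eq_mul, Pi.zero_apply] at h3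
  exact (IsUnit.mul_right_eq_zero hdet).mp h3

lemma cond_iff (n : ℕ) (t : ZMod C) (Z : Matrix (Fin n) (Fin (n+1)) (ZMod C)) :
    (∀ j : Fin (n+1),
        t * ((-1)^(j : ℕ) * (Z.submatrix id j.succAbove).det) + (if j = 0 then 1 else 0) = 0)
      ↔ (t * (Z.submatrix id Fin.succ).det = -1 ∧ ∀ i, Z i 0 = 0) := by
  have hsz : (0 : Fin (n+1)).succAbove = Fin.succ := Fin.succAbove_zero
  have hsz0 : ∀ k : Fin n, (Fin.succ k).succAbove ⟨0, k.pos⟩ = 0 := by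
    intro k
    rw [Fin.succAbove_of_castSucc_lt _ _ (by simp [Fin.lt_def])]
    ext
    simp
  constructor
  · intro h
    have h0 := h 0
    rw [if_pos rfl, hsz] at h0
    simp only [Fin.val_zero, pow_zero, one_mul] at h0
    have hW : t * (Z.submatrix id Fin.succ).det = -1 := by linear_combination h0
    have hu : IsUnit t := IsUnit.of_mul_eq_one (a := t) (-(Z.submatrix id Fin.succ).det)
      (by linear_combination -hW)
    refine ⟨hW, zeroCol_of_minors n Z ?_ ?_⟩
    · exact IsUnit.of_mul_eq_one (-t) (by linear_combination -hW)
    · intro k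
      have hk := h (Fin.succ k)
      rw [if_neg (Fin.succ_ne_zero k), add_zero, ← mul_assoc] at hk
      have h1 : IsUnit (t * (-1 : ZMod C)^((Fin.succ k : Fin (n+1)) : ℕ)) :=
        hu.mul ((isUnit_one.neg).pow _)
      exact (IsUnit.mul_right_eq_zero h1).mp hk
  · rintro ⟨hW, hc⟩ j
    refine Fin.cases ?_ ?_ j
    · rw [if_pos rfl, hsz]
      simp only [Fin.val_zero, pow_zero, one_mul]
      linear_combination hW
    · intro k
      rw [if_neg (Fin.succ_ne_zero k), add_zero]
      have : (Z.submatrix id (Fin.succ k).succAbove).det = 0 := by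
        apply Matrix.det_eq_zero_of_column_eq_zero ⟨0, k.pos⟩
        intro i
        rw [Matrix.submatrix_apply, id_eq, hsz0 k]
        exact hc i
      rw [this, mul_zero, mul_zero]


def rowSplit (C n : ℕ) :
    ((Fin (n+1) → ZMod C) × (Matrix (Fin n) (Fin (n+1)) (ZMod C)))
      ≃ Matrix (Fin (n+1)) (Fin (n+1)) (ZMod C) :=
  (Fin.consEquiv fun _ => Fin (n+1) → ZMod C).trans Matrix.of

def colSplit (C n : ℕ) :
    ((Fin n → ZMod C) × Matrix (Fin n) (Fin n) (ZMod C))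
      ≃ Matrix (Fin n) (Fin (n+1)) (ZMod C) :=
  ((Equiv.arrowProdEquivProdArrow _ _ _).symm.trans
    (Equiv.piCongrRight fun _ => Fin.consEquiv fun _ => ZMod C)).trans Matrix.of

lemma rowSplit_apply (n : ℕ) (r : Fin (n+1) → ZMod C) (Z : Matrix (Fin n) (Fin (n+1)) (ZMod C)) :
    rowSplit C n ⟨r, Z⟩ = Matrix.of (Fin.cons r Z) := rfl

lemma colSplit_apply (n : ℕ) (c : Fin n → ZMod C) (W : Matrix (Fin n) (Fin n) (ZMod C)) :
    colSplit C n ⟨c, W⟩ = Matrix.of (fun i => Fin.cons (c i) (W i)) := rfl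

lemma hdet (n : ℕ) (r : Fin (n+1) → ZMod C) (Z : Matrix (Fin n) (Fin (n+1)) (ZMod C)) :
    (Matrix.of (Fin.cons r Z)).det
      = ∑ j : Fin (n+1), (-1)^(j:ℕ) * r j
          * (Z.submatrix id j.succAbove).det := by
  rw [Matrix.det_succ_row_zero]
  refine Finset.sum_congr rfl fun j _ => ?_
  rfl

lemma htr (n : ℕ) (r : Fin (n+1) → ZMod C) (Z : Matrix (Fin n) (Fin (n+1)) (ZMod C)) :
    (Matrix.of (Fin.cons r Z)).trace
      = r 0 + (Z.submatrix id Fin.succ).trace := by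
  simp [Matrix.trace, Matrix.diag, Fin.sum_univ_succ, Fin.cons_zero, Fin.cons_succ]
  rfl

lemma Nsum (n : ℕ) (t : ZMod C) :
    ∑ X : Matrix (Fin (n+1)) (Fin (n+1)) (ZMod C), ZMod.stdAddChar (t * X.det + X.trace)
      = (C:ℂ)^(n+1) * ∑ W : Matrix (Fin n) (Fin n) (ZMod C),
          (if t * W.det = -1 then (1:ℂ) else 0) * ZMod.stdAddChar W.trace := by
  classical
  rw [← Equiv.sum_comp (rowSplit C n)
      (fun X => ZMod.stdAddChar (t * X.det + X.trace)), Fintype.sum_prod_type,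
      Finset.sum_comm]
  have inner : ∀ Z : Matrix (Fin n) (Fin (n+1)) (ZMod C),
      ∑ r : Fin (n+1) → ZMod C,
        ZMod.stdAddChar (t * (rowSplit C n ⟨r, Z⟩).det + (rowSplit C n ⟨r, Z⟩).trace)
      = (if (t * (Z.submatrix id Fin.succ).det = -1 ∧ ∀ i, Z i 0 = 0)
          then (C:ℂ)^(n+1) else 0)
          * ZMod.stdAddChar (Z.submatrix id Fin.succ).trace := by
    intro Z
    set a : Fin (n+1) → ZMod C := fun j =>
      t * ((-1)^(j:ℕ) * (Z.submatrix id j.succAbove).det)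
        + (if j = 0 then 1 else 0) with ha
    have harg : ∀ r : Fin (n+1) → ZMod C,
        t * (rowSplit C n ⟨r, Z⟩).det + (rowSplit C n ⟨r, Z⟩).trace
          = (∑ j, r j * a j) + (Z.submatrix id Fin.succ).trace := by
      intro r
      have h1 : ∀ j : Fin (n+1), r j * a j
          = t * ((-1)^(j:ℕ) * r j * (Z.submatrix id j.succAbove).det)
            + (if j = 0 then r j else 0) := by
        intro j
        rw [ha]
        by_cases h : j = 0 <;> simp only [h, if_true, if_false, reduceIte] <;> ring
      rw [rowSplit_apply, hdet, htr, Finset.mul_sum,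
        Finset.sum_congr rfl fun j _ => h1 j, Finset.sum_add_distrib,
        Finset.sum_ite_eq' Finset.univ (0 : Fin (n+1)) r, if_pos (Finset.mem_univ _)]
      ring
    simp_rw [harg]
    have hsplit : ∀ r : Fin (n+1) → ZMod C,
        ZMod.stdAddChar ((∑ j, r j * a j) + (Z.submatrix id Fin.succ).trace)
          = (∏ j, ZMod.stdAddChar (r j * a j))
            * ZMod.stdAddChar (Z.submatrix id Fin.succ).trace := by
      intro r
      rw [AddChar.map_add_eq_mul, addChar_map_sum]
    simp_rw [hsplit]
    rw [← Finset.sum_mul]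
    congr 1
    rw [← Fintype.piFinset_univ, ← Finset.prod_univ_sum (fun _ => Finset.univ) (fun j x => ZMod.stdAddChar (x * a j))]
    have hfac : ∀ j : Fin (n+1), ∑ x : ZMod C, ZMod.stdAddChar (x * a j)
        = if a j = 0 then (C:ℂ) else 0 := fun j => F4 (a j)
    rw [Finset.prod_congr rfl fun j _ => hfac j]
    by_cases hall : ∀ j, a j = 0
    · rw [Finset.prod_congr rfl fun j _ => if_pos (hall j), Finset.prod_const,
        if_pos (((cond_iff n t Z).mp hall))]
      simp
    · obtain ⟨j0, hj0⟩ := not_forall.mp hall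
      have hzero : (if a j0 = 0 then (C:ℂ) else 0) = 0 := if_neg hj0
      rw [Finset.prod_eq_zero (Finset.mem_univ j0) hzero, if_neg]
      intro hcon
      exact hall ((cond_iff n t Z).mpr hcon)
  rw [Finset.sum_congr rfl fun Z _ => inner Z]
  rw [← Equiv.sum_comp (colSplit C n)
    (fun Z => (if (t * (Z.submatrix id Fin.succ).det = -1 ∧ ∀ i, Z i 0 = 0)
          then ((C:ℂ))^(n+1) else 0)
          * ZMod.stdAddChar (Z.submatrix id Fin.succ).trace)]
  have heval : ∀ (c : Fin n → ZMod C) (W : Matrix (Fin n) (Fin n) (ZMod C)),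
      ((colSplit C n ⟨c, W⟩).submatrix id Fin.succ) = W
        ∧ (∀ i, (colSplit C n ⟨c, W⟩) i 0 = c i) := by
    intro c W
    constructor
    · ext i j; simp [colSplit_apply, Fin.cons_succ]
    · intro i; simp [colSplit_apply]
  rw [Fintype.sum_prod_type, Finset.sum_comm]
  have hinner2 : ∀ W : Matrix (Fin n) (Fin n) (ZMod C),
      (∑ c : Fin n → ZMod C,
        (if (t * ((colSplit C n ⟨c, W⟩).submatrix id Fin.succ).det = -1
              ∧ ∀ i, (colSplit C n ⟨c, W⟩) i 0 = 0)
          then ((C:ℂ))^(n+1) else 0)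
          * ZMod.stdAddChar ((colSplit C n ⟨c, W⟩).submatrix id Fin.succ).trace)
      = (C:ℂ)^(n+1) * ((if t * W.det = -1 then (1:ℂ) else 0) * ZMod.stdAddChar W.trace) := by
    intro W
    have hsummand : ∀ c : Fin n → ZMod C,
        (if (t * ((colSplit C n ⟨c, W⟩).submatrix id Fin.succ).det = -1
              ∧ ∀ i, (colSplit C n ⟨c, W⟩) i 0 = 0)
          then ((C:ℂ))^(n+1) else 0)
          * ZMod.stdAddChar ((colSplit C n ⟨c, W⟩).submatrix id Fin.succ).trace
        = (if c = 0 then (1:ℂ) else 0)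
            * ((if t * W.det = -1 then ((C:ℂ))^(n+1) else 0) * ZMod.stdAddChar W.trace) := by
      intro c
      rw [(heval c W).1]
      have hcond : ((∀ i, (colSplit C n ⟨c, W⟩) i 0 = 0)) ↔ c = 0 := by
        simp_rw [(heval c W).2]
        exact ⟨fun h => funext h, fun h i => congrFun h i⟩
      simp only [hcond]
      by_cases h1 : t * W.det = -1 <;> by_cases h2 : c = 0 <;> simp [h1, h2]
    rw [Finset.sum_congr rfl fun c _ => hsummand c, ← Finset.sum_mul,
      Finset.sum_ite_eq' Finset.univ (0 : Fin n → ZMod C) (fun _ => (1:ℂ)),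
      if_pos (Finset.mem_univ _), one_mul]
    split_ifs <;> ring
  rw [Finset.sum_congr rfl fun W _ => hinner2 W, ← Finset.mul_sum]

noncomputable def S (C : ℕ) [NeZero C] (χ : DirichletCharacter ℂ C) (g : ℕ) : ℂ :=
  ∑ X : Matrix (Fin g) (Fin g) (ZMod C), χ X.det * ZMod.stdAddChar X.trace

lemma S_zero (χ : DirichletCharacter ℂ C) : S C χ 0 = 1 := by
  rw [S]
  rw [Finset.sum_eq_single_of_mem (0 : Matrix (Fin 0) (Fin 0) (ZMod C)) (Finset.mem_univ _)]
  · simp [Matrix.det_isEmpty, Matrix.trace]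
  · intro X _ hX
    exact absurd (Subsingleton.elim X 0) hX

lemma Srec (χ : DirichletCharacter ℂ C) (hχ : χ.IsPrimitive) (n : ℕ) :
    S C χ (n+1) = (C:ℂ)^n * gaussSum χ ZMod.stdAddChar * S C χ n := by
  have hχi : (χ⁻¹).IsPrimitive := isPrimitive_inv hχ
  have hKne : gaussSum χ⁻¹ ZMod.stdAddChar ≠ 0 := Kne hχi
  apply mul_left_cancel₀ hKne
  have key : gaussSum χ⁻¹ ZMod.stdAddChar * S C χ (n+1)
      = (C:ℂ)^(n+1) * χ⁻¹ (-1) * S C χ n := by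
    rw [S, Finset.mul_sum]
    have h1 : ∀ X : Matrix (Fin (n+1)) (Fin (n+1)) (ZMod C),
        gaussSum χ⁻¹ ZMod.stdAddChar * (χ X.det * ZMod.stdAddChar X.trace)
          = ∑ t : ZMod C, χ⁻¹ t * ZMod.stdAddChar (t * X.det + X.trace) := by
      intro X
      rw [show gaussSum χ⁻¹ ZMod.stdAddChar * (χ X.det * ZMod.stdAddChar X.trace)
          = (χ X.det * gaussSum χ⁻¹ ZMod.stdAddChar) * ZMod.stdAddChar X.trace by ring,
        ← F1 hχi X.det, Finset.sum_mul]
      refine Finset.sum_congr rfl fun t _ => ?_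
      rw [mul_assoc, ← AddChar.map_add_eq_mul]
    rw [Finset.sum_congr rfl fun X _ => h1 X, Finset.sum_comm]
    have h2 : ∀ t : ZMod C,
        ∑ X : Matrix (Fin (n+1)) (Fin (n+1)) (ZMod C),
          χ⁻¹ t * ZMod.stdAddChar (t * X.det + X.trace)
        = (C:ℂ)^(n+1) * ∑ W : Matrix (Fin n) (Fin n) (ZMod C),
            χ⁻¹ t * ((if t * W.det = -1 then (1:ℂ) else 0) * ZMod.stdAddChar W.trace) := by
      intro t
      rw [← Finset.mul_sum, Nsum n t, ← Finset.mul_sum]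
      ring
    rw [Finset.sum_congr rfl fun t _ => h2 t, ← Finset.mul_sum, Finset.sum_comm]
    have hfin : ∀ W : Matrix (Fin n) (Fin n) (ZMod C), True := fun _ => trivial
    have h3 : ∀ W : Matrix (Fin n) (Fin n) (ZMod C),
        ∑ t : ZMod C, χ⁻¹ t * ((if t * W.det = -1 then (1:ℂ) else 0) * ZMod.stdAddChar W.trace)
          = (χ⁻¹ (-1) * χ W.det) * ZMod.stdAddChar W.trace := by
      intro W
      rw [← hD W.det, Finset.sum_mul]
      exact Finset.sum_congr rfl fun t _ => by ring
    rw [Finset.sum_congr rfl fun W _ => h3 W, S]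
    simp only [Finset.mul_sum]
    exact Finset.sum_congr rfl fun W _ => by ring
  rw [key, show gaussSum χ⁻¹ ZMod.stdAddChar * ((C:ℂ)^n * gaussSum χ ZMod.stdAddChar * S C χ n)
      = (C:ℂ)^n * (gaussSum χ ZMod.stdAddChar * gaussSum χ⁻¹ ZMod.stdAddChar) * S C χ n by ring,
    F2 hχi]
  ring

lemma Sformula (χ : DirichletCharacter ℂ C) (hχ : χ.IsPrimitive) (g : ℕ) :
    S C χ g = (C:ℂ)^(g*(g-1)/2) * (gaussSum χ ZMod.stdAddChar)^g := by
  induction g with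
  | zero => simp [S_zero]
  | succ n ih =>
    rw [Srec χ hχ n, ih]
    have harith : (n+1)*((n+1)-1)/2 = n + n*(n-1)/2 := by
      have h2c : ∀ m : ℕ, m*(m-1)/2 = m.choose 2 := fun m => (Nat.choose_two_right m).symm
      rw [h2c, h2c, Nat.choose_succ_succ, Nat.choose_one_right]
    rw [harith, pow_add, pow_succ]
    ring

end Aux

/-- the matrix Gauss sum of a primitive Dirichlet character `χ`
modulo `C` against a matrix `T` with unit determinant equals
`C^(g(g−1)/2) · χ(det T)⁻¹ · G(χ)^g`. -/
theorem matrix_gauss_sum (C : ℕ) [NeZero C] (hC : 1 ≤ C)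
    (χ : DirichletCharacter ℂ C) (hχ : χ.IsPrimitive)
    (g : ℕ) (hg : 1 ≤ g)
    (T : Matrix (Fin g) (Fin g) (ZMod C)) (hT : IsUnit T.det) :
    (∑ X : Matrix (Fin g) (Fin g) (ZMod C),
        χ X.det * stdAddChar C ((T * X).trace)) =
      (C : ℂ) ^ (g * (g - 1) / 2) * (χ T.det)⁻¹ *
        (∑ x : ZMod C, χ x * stdAddChar C x) ^ g := by
  simp only [stdAddChar_eq]
  have hsub : (∑ X : Matrix (Fin g) (Fin g) (ZMod C), χ X.det * ZMod.stdAddChar ((T * X).trace))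
      = (χ T.det)⁻¹ * S C χ g := by
    have hli : ∀ X : Matrix (Fin g) (Fin g) (ZMod C), T * (T⁻¹ * X) = X := fun X => by
      rw [← Matrix.mul_assoc, Matrix.mul_nonsing_inv _ hT, Matrix.one_mul]
    have hri : ∀ X : Matrix (Fin g) (Fin g) (ZMod C), T⁻¹ * (T * X) = X := fun X => by
      rw [← Matrix.mul_assoc, Matrix.nonsing_inv_mul _ hT, Matrix.one_mul]
    let e : Matrix (Fin g) (Fin g) (ZMod C) ≃ Matrix (Fin g) (Fin g) (ZMod C) :=
      ⟨fun X => T⁻¹ * X, fun Y => T * Y, hli, hri⟩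
    rw [← Equiv.sum_comp e (fun X => χ X.det * ZMod.stdAddChar ((T * X).trace))]
    have hterm : ∀ X : Matrix (Fin g) (Fin g) (ZMod C),
        χ (T⁻¹ * X).det * ZMod.stdAddChar ((T * (T⁻¹ * X)).trace)
          = (χ T.det)⁻¹ * (χ X.det * ZMod.stdAddChar X.trace) := by
      intro X
      rw [hli X, Matrix.det_mul, map_mul χ, Matrix.det_nonsing_inv]
      have hcinv : χ (Ring.inverse T.det) = (χ T.det)⁻¹ := by
        have hmul : χ T.det * χ (Ring.inverse T.det) = 1 := by
          rw [← _root_.map_mul χ, Ring.mul_inverse_cancel _ hT, _root_.map_one χ]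
        exact eq_inv_of_mul_eq_one_left (by rw [mul_comm] at hmul; exact hmul)
      rw [hcinv]
      ring
    exact (Finset.sum_congr rfl fun X _ => hterm X).trans (by rw [← Finset.mul_sum, S])
  rw [hsub, Sformula χ hχ g]
  have hgs : gaussSum χ ZMod.stdAddChar = ∑ x : ZMod C, χ x * ZMod.stdAddChar x := rfl
  rw [← hgs]
  ring
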